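/- Let γ > 0, v = (B, w, z) with B ≠ 0, and ξ ∈ ℝ² ∖ {0}. Then Ã(ξ, v)·U(ξ) = U(ξ)·D(ξ), where D(ξ) = diag((w−Bz)·ξ, (w−Bz)·ξ, (w+(1−B)z)·ξ, (w+(1−B)z)·ξ − √γ|ξ|, (w+(1−B)z)·ξ + √γ|ξ|). In other words, the columns of U(ξ) are eigenvectors of Ã(ξ, v) with the listed real eigenvalues. -/

import Mathlib

open Matrix

/-- The flux matrix `Ã₁(v)` of the two-phase system in the variables `v = (B, w, z)`. -/
noncomputable def At1 (γ B w1 w2 z1 z2 : ℝ) : Matrix (Fin 5) (Fin 5) ℝ :=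
  !![w1 + z1 * (1 - 2 * B), B, 0, B * (1 - B), 0;
     γ + z1 ^ 2 * (1 - 2 * B), w1 + B * z1, 0, 2 * B * z1 * (1 - B), 0;
     z1 * z2 * (1 - 2 * B), B * z2, w1, B * z2 * (1 - B), B * z1 * (1 - B);
     γ / B - z1 ^ 2, z1, 0, w1 + z1 * (1 - 2 * B), 0;
     -(z1 * z2), 0, z1, 0, w1 + z1 * (1 - 2 * B)]

/-- The flux matrix `Ã₂(v)` of the two-phase system in the variables `v = (B, w, z)`. -/
noncomputable def At2 (γ B w1 w2 z1 z2 : ℝ) : Matrix (Fin 5) (Fin 5) ℝ :=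
  !![w2 + z2 * (1 - 2 * B), 0, B, 0, B * (1 - B);
     z1 * z2 * (1 - 2 * B), w2, B * z1, B * z2 * (1 - B), B * z1 * (1 - B);
     γ + z2 ^ 2 * (1 - 2 * B), 0, w2 + B * z2, 0, 2 * B * z2 * (1 - B);
     -(z1 * z2), z2, 0, w2 + z2 * (1 - 2 * B), 0;
     γ / B - z2 ^ 2, 0, z2, 0, w2 + z2 * (1 - 2 * B)]

/-- The symbol `Ã(ξ, v) = ξ₁Ã₁(v) + ξ₂Ã₂(v)`. -/
noncomputable def At (γ B w1 w2 z1 z2 ξ1 ξ2 : ℝ) : Matrix (Fin 5) (Fin 5) ℝ :=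
  ξ1 • At1 γ B w1 w2 z1 z2 + ξ2 • At2 γ B w1 w2 z1 z2

/-- The matrix `U(ξ)` whose columns are the eigenvectors of the symbol `Ã(ξ, v)`. -/
noncomputable def Um (γ B z1 z2 ξ1 ξ2 : ℝ) : Matrix (Fin 5) (Fin 5) ℝ :=
  !![0, 0, 0, -(B / Real.sqrt γ), B / Real.sqrt γ;
     -(1 - B), 0, -(B * ξ2 / Real.sqrt (ξ1 ^ 2 + ξ2 ^ 2)),
       B * (γ * ξ1 - z1 * Real.sqrt γ * Real.sqrt (ξ1 ^ 2 + ξ2 ^ 2)) /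
         (γ * Real.sqrt (ξ1 ^ 2 + ξ2 ^ 2)),
       B * (γ * ξ1 + z1 * Real.sqrt γ * Real.sqrt (ξ1 ^ 2 + ξ2 ^ 2)) /
         (γ * Real.sqrt (ξ1 ^ 2 + ξ2 ^ 2));
     0, -(1 - B), B * ξ1 / Real.sqrt (ξ1 ^ 2 + ξ2 ^ 2),
       B * (γ * ξ2 - z2 * Real.sqrt γ * Real.sqrt (ξ1 ^ 2 + ξ2 ^ 2)) /
         (γ * Real.sqrt (ξ1 ^ 2 + ξ2 ^ 2)),
       B * (γ * ξ2 + z2 * Real.sqrt γ * Real.sqrt (ξ1 ^ 2 + ξ2 ^ 2)) /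
         (γ * Real.sqrt (ξ1 ^ 2 + ξ2 ^ 2));
     1, 0, -(ξ2 / Real.sqrt (ξ1 ^ 2 + ξ2 ^ 2)), ξ1 / Real.sqrt (ξ1 ^ 2 + ξ2 ^ 2),
       ξ1 / Real.sqrt (ξ1 ^ 2 + ξ2 ^ 2);
     0, 1, ξ1 / Real.sqrt (ξ1 ^ 2 + ξ2 ^ 2), ξ2 / Real.sqrt (ξ1 ^ 2 + ξ2 ^ 2),
       ξ2 / Real.sqrt (ξ1 ^ 2 + ξ2 ^ 2)]

-- (unused here)

set_option maxHeartbeats 2000000 in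
/-- The columns of `U(ξ)` are eigenvectors of `Ã(ξ, v)`:
`Ã(ξ, v)·U(ξ) = U(ξ)·D(ξ)` where `D(ξ)` is the diagonal matrix of the real eigenvalues
`(w−Bz)·ξ, (w−Bz)·ξ, (w+(1−B)z)·ξ, (w+(1−B)z)·ξ ∓ √γ|ξ|`. -/
theorem stmt3 (γ B w1 w2 z1 z2 ξ1 ξ2 : ℝ) (hγ : 0 < γ) (hB : B ≠ 0)
    (hξ : (ξ1, ξ2) ≠ (0, 0)) :
    At γ B w1 w2 z1 z2 ξ1 ξ2 * Um γ B z1 z2 ξ1 ξ2 =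
      Um γ B z1 z2 ξ1 ξ2 *
        Matrix.diagonal
          ![(w1 - B * z1) * ξ1 + (w2 - B * z2) * ξ2,
            (w1 - B * z1) * ξ1 + (w2 - B * z2) * ξ2,
            (w1 + (1 - B) * z1) * ξ1 + (w2 + (1 - B) * z2) * ξ2,
            (w1 + (1 - B) * z1) * ξ1 + (w2 + (1 - B) * z2) * ξ2
              - Real.sqrt γ * Real.sqrt (ξ1 ^ 2 + ξ2 ^ 2),
            (w1 + (1 - B) * z1) * ξ1 + (w2 + (1 - B) * z2) * ξ2
              + Real.sqrt γ * Real.sqrt (ξ1 ^ 2 + ξ2 ^ 2)] := by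
  have hq : (0:ℝ) < ξ1 ^ 2 + ξ2 ^ 2 := by
    rcases eq_or_ne ξ1 0 with h1 | h1
    · have h2 : ξ2 ≠ 0 := fun h2 => hξ (by simp [h1, h2])
      positivity
    · positivity
  set S := Real.sqrt (ξ1 ^ 2 + ξ2 ^ 2) with hSdef
  set G := Real.sqrt γ with hGdef
  have hS2 : S ^ 2 = ξ1 ^ 2 + ξ2 ^ 2 := Real.sq_sqrt hq.le
  have hG2 : G ^ 2 = γ := Real.sq_sqrt hγ.le
  have hS0 : S ≠ 0 := by positivity
  have hG0 : G ≠ 0 := by positivity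
  rw [show γ = G ^ 2 from hG2.symm]
  ext i j
  have hGnn : (0:ℝ) ≤ G := Real.sqrt_nonneg _
  fin_cases i <;> fin_cases j <;>
    simp only [At, At1, At2, Um, Matrix.mul_apply, Matrix.mul_diagonal, Fin.sum_univ_five,
      Matrix.add_apply, Matrix.smul_apply, smul_eq_mul, Matrix.cons_val', Matrix.cons_val_zero,
      Matrix.cons_val_one, Matrix.head_cons, Matrix.empty_val', Matrix.cons_val_fin_one,
      Matrix.of_apply, Matrix.head_fin_const, Matrix.cons_val_two, Matrix.tail_cons,
      Matrix.cons_val_three, Matrix.cons_val_four, Matrix.cons_val_succ, Fin.reduceFinMk,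
      Matrix.diagonal_apply_eq, Matrix.diagonal_apply_ne, Matrix.mul_diagonal,
      Matrix.diagonal_apply, Fin.reduceEq, ↓reduceIte, mul_zero, add_zero, zero_add] <;>
    (try simp only [← hSdef, Real.sqrt_sq hGnn]) <;> (try field_simp)
  next => ring
  next => ring
  next => ring
  next => linear_combination (-G) * hS2
  next => linear_combination (-G) * hS2
  next => ring
  next => ring
  next => ring
  next => linear_combination (-G * z1) * hS2
  next => linear_combination (-G * z1) * hS2
  next => ring
  next => ring
  next => ring
  next => linear_combination (-G * z2) * hS2
  next => linear_combination (-G * z2) * hS2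
  next => ring
  next => ring
  next => ring
  next => ring
  next => ring
  next => ring
  next => ring
  next => ring
  next => ring
  next => ring
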